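/- For lower transition operators T̲ and S̲ on a finite state space, the coefficient of ergodicity is submultiplicative under composition: β(T̲ ∘ S̲) ≤ β(T̲)·β(S̲), where β(A) := max{‖Af‖_v : 0 ≤ f ≤ 1}. -/

import Mathlib

open scoped BigOperators

variable {X : Type*} [Fintype X] [Nonempty X] [DecidableEq X]

/-- The maximum norm on real-valued functions on a finite state space. -/
noncomputable def maxNorm (f : X → ℝ) : ℝ := ⨆ x, |f x|

/-- The variation seminorm `max f - min f`. -/
noncomputable def varNorm (f : X → ℝ) : ℝ := (⨆ x, f x) - (⨅ x, f x)

/-- The centred seminorm `(max f - min f)/2`. -/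
noncomputable def centNorm (f : X → ℝ) : ℝ := ((⨆ x, f x) - (⨅ x, f x)) / 2

/-- Indicator function of the singleton `{x}`. -/
def indic (x : X) : X → ℝ := fun y => if y = x then 1 else 0

/-- A lower transition operator: dominates the minimum, is superadditive,
and is non-negatively homogeneous. -/
def IsLTO (T : (X → ℝ) → (X → ℝ)) : Prop :=
  (∀ f x, (⨅ y, f y) ≤ T f x) ∧
  (∀ f g x, T f x + T g x ≤ T (f + g) x) ∧
  (∀ (μ : ℝ), 0 ≤ μ → ∀ f, T (μ • f) = μ • T f)

/-- A lower transition rate operator: vanishes on constants, is superadditive,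
is non-negatively homogeneous, and is non-negative off the diagonal on indicators. -/
def IsLTRO (Q : (X → ℝ) → (X → ℝ)) : Prop :=
  (∀ γ : ℝ, Q (fun _ => γ) = 0) ∧
  (∀ f g x, Q f x + Q g x ≤ Q (f + g) x) ∧
  (∀ (μ : ℝ), 0 ≤ μ → ∀ f, Q (μ • f) = μ • Q f) ∧
  (∀ x y, x ≠ y → 0 ≤ Q (indic x) y)

/-- Operator norm induced by the maximum norm. -/
noncomputable def opNorm (A : (X → ℝ) → (X → ℝ)) : ℝ :=
  sSup {r | ∃ f : X → ℝ, maxNorm f = 1 ∧ r = maxNorm (A f)}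

/-- The (weak) coefficient of ergodicity. -/
noncomputable def coeffErg (A : (X → ℝ) → (X → ℝ)) : ℝ :=
  sSup {r | ∃ f : X → ℝ, (∀ x, 0 ≤ f x ∧ f x ≤ 1) ∧ r = varNorm (A f)}

lemma affine_iSup (f : X → ℝ) {a : ℝ} (ha : 0 ≤ a) (b : ℝ) :
    (⨆ x, a * f x + b) = a * (⨆ x, f x) + b := by
  have hm : Monotone (fun t : ℝ => a * t + b) := fun s t hst => by
    dsimp; nlinarith
  exact (hm.map_ciSup_of_continuousAt (Continuous.continuousAt (by continuity))
    (Finite.bddAbove_range f)).symm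

lemma affine_iInf (f : X → ℝ) {a : ℝ} (ha : 0 ≤ a) (b : ℝ) :
    (⨅ x, a * f x + b) = a * (⨅ x, f x) + b := by
  have hm : Monotone (fun t : ℝ => a * t + b) := fun s t hst => by
    dsimp; nlinarith
  exact (hm.map_ciInf_of_continuousAt (Continuous.continuousAt (by continuity))
    (Finite.bddBelow_range f)).symm

lemma lto_const (T : (X → ℝ) → (X → ℝ)) (hT : IsLTO T) (c : ℝ) (x : X) :
    T (fun _ => c) x = c := by
  obtain ⟨hmin, hadd, hsmul⟩ := hT
  have hzero : T 0 = 0 := by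
    have := hsmul 0 le_rfl 0
    simpa using this
  have h1 : c ≤ T (fun _ => c) x := by
    have := hmin (fun _ => c) x
    simpa [ciInf_const] using this
  have h2 : T (fun _ => c) x ≤ c := by
    have hs := hadd (fun _ => c) (fun _ => -c) x
    have he : (fun _ : X => c) + (fun _ => -c) = (0 : X → ℝ) := by
      funext y; simp
    rw [he, hzero] at hs
    simp only [Pi.zero_apply] at hs
    have hmc : -c ≤ T (fun _ => -c) x := by
      have := hmin (fun _ => -c) x
      simpa [ciInf_const] using this
    linarith
  linarith

lemma lto_translate (T : (X → ℝ) → (X → ℝ)) (hT : IsLTO T) (f : X → ℝ) (c : ℝ) (x : X) :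
    T (f + fun _ => c) x = T f x + c := by
  have hadd := hT.2.1
  have h1 : T f x + c ≤ T (f + fun _ => c) x := by
    have := hadd f (fun _ => c) x
    rwa [lto_const T hT c x] at this
  have h2 : T (f + fun _ => c) x ≤ T f x + c := by
    have := hadd (f + fun _ => c) (fun _ => -c) x
    have he : (f + fun _ => c) + (fun _ => -c) = f := by
      funext y; simp
    rw [he, lto_const T hT (-c) x] at this
    linarith
  linarith

lemma varNorm_const (c : ℝ) : varNorm (fun _ : X => c) = 0 := by
  simp [varNorm, ciSup_const, ciInf_const]

lemma coeffErg_set_bddAbove (T : (X → ℝ) → (X → ℝ)) (hT : IsLTO T) :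
    BddAbove {r | ∃ f : X → ℝ, (∀ x, 0 ≤ f x ∧ f x ≤ 1) ∧ r = varNorm (T f)} := by
  obtain ⟨hmin, hadd, hsmul⟩ := hT
  refine ⟨1, ?_⟩
  rintro r ⟨f, hf, rfl⟩
  have hub : ∀ x, T f x ≤ 1 := by
    intro x
    have hs := hadd f ((fun _ => 1) - f) x
    have he : f + ((fun _ : X => 1) - f) = fun _ => 1 := by funext y; simp
    rw [he, lto_const T ⟨hmin, hadd, hsmul⟩ 1 x] at hs
    have h0 : (0 : ℝ) ≤ T ((fun _ => 1) - f) x := by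
      refine le_trans ?_ (hmin ((fun _ => 1) - f) x)
      exact le_ciInf fun y => by have := (hf y).2; simp; linarith
    linarith
  have hlb : ∀ x, 0 ≤ T f x := by
    intro x
    refine le_trans ?_ (hmin f x)
    exact le_ciInf fun y => (hf y).1
  have h1 : (⨆ x, T f x) ≤ 1 := ciSup_le hub
  have h2 : (0 : ℝ) ≤ ⨅ x, T f x := le_ciInf hlb
  simp only [varNorm]; linarith

lemma coeffErg_set_nonempty (T : (X → ℝ) → (X → ℝ)) (hT : IsLTO T) :
    ((0:ℝ) ∈ {r | ∃ f : X → ℝ, (∀ x, 0 ≤ f x ∧ f x ≤ 1) ∧ r = varNorm (T f)}) := by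
  refine ⟨fun _ => 0, fun x => ⟨le_rfl, zero_le_one⟩, ?_⟩
  have : T (fun _ => (0:ℝ)) = fun _ => (0:ℝ) := funext (lto_const T hT 0)
  rw [this, varNorm_const]

lemma coeffErg_nonneg (T : (X → ℝ) → (X → ℝ)) (hT : IsLTO T) : 0 ≤ coeffErg T :=
  le_csSup (coeffErg_set_bddAbove T hT) (coeffErg_set_nonempty T hT)

lemma lto_varNorm_le (T : (X → ℝ) → (X → ℝ)) (hT : IsLTO T) (g : X → ℝ) :
    varNorm (T g) ≤ coeffErg T * varNorm g := by
  obtain ⟨hmin, hadd, hsmul⟩ := hT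
  set m := ⨅ x, g x with hm
  set v := varNorm g with hv
  have hv0 : 0 ≤ v := by
    have : (⨅ x, g x) ≤ ⨆ x, g x := by
      have x0 := Classical.arbitrary X
      exact le_trans (ciInf_le (Finite.bddBelow_range g) x0)
        (le_ciSup (Finite.bddAbove_range g) x0)
    simp only [hv, varNorm]; linarith
  rcases eq_or_lt_of_le hv0 with hveq | hvpos
  · -- v = 0 : g is constant
    have hgc : g = fun _ => m := by
      funext x
      have h1 : g x ≤ ⨆ y, g y := le_ciSup (Finite.bddAbove_range g) x
      have h2 : m ≤ g x := ciInf_le (Finite.bddBelow_range g) x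
      have h3 : (⨆ y, g y) = m := by
        simp only [hv, varNorm] at hveq; linarith
    -- g x = m
      linarith [h3 ▸ h1]
    rw [hgc]
    have : T (fun _ => m) = fun _ => m := funext (lto_const T ⟨hmin, hadd, hsmul⟩ m)
    rw [this, varNorm_const, ← hveq, mul_zero]
  · -- v > 0
    set h : X → ℝ := fun x => (g x - m) / v with hh
    have hhb : ∀ x, 0 ≤ h x ∧ h x ≤ 1 := by
      intro x
      constructor
      · apply div_nonneg _ (le_of_lt hvpos)
        have := ciInf_le (Finite.bddBelow_range g) x
        linarith
      · rw [div_le_one hvpos]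
        have := le_ciSup (Finite.bddAbove_range g) x
        simp only [hv, varNorm]; linarith
    have hgdecomp : g = v • h + fun _ => m := by
      funext x
      simp only [hh, Pi.add_apply, Pi.smul_apply, smul_eq_mul]
      field_simp
      ring
    have hTg : ∀ x, T g x = v * T h x + m := by
      intro x
      rw [hgdecomp, lto_translate T ⟨hmin, hadd, hsmul⟩ (v • h) m x,
        hsmul v (le_of_lt hvpos) h]
      simp [smul_eq_mul]
    have hTh : varNorm (T h) ≤ coeffErg T :=
      le_csSup (coeffErg_set_bddAbove T ⟨hmin, hadd, hsmul⟩) ⟨h, hhb, rfl⟩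
    have hvar : varNorm (T g) = v * varNorm (T h) := by
      simp only [varNorm]
      have e1 : (⨆ x, T g x) = v * (⨆ x, T h x) + m := by
        rw [show (fun x => T g x) = fun x => v * T h x + m from funext hTg]
        exact affine_iSup (fun x => T h x) (le_of_lt hvpos) m
      have e2 : (⨅ x, T g x) = v * (⨅ x, T h x) + m := by
        rw [show (fun x => T g x) = fun x => v * T h x + m from funext hTg]
        exact affine_iInf (fun x => T h x) (le_of_lt hvpos) m
      rw [e1, e2]; ring
    rw [hvar, mul_comm (coeffErg T) v]
    exact mul_le_mul_of_nonneg_left hTh (le_of_lt hvpos)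

theorem stmt12 (T S : (X → ℝ) → (X → ℝ)) (hT : IsLTO T) (hS : IsLTO S) :
    coeffErg (T ∘ S) ≤ coeffErg T * coeffErg S := by
  apply csSup_le ⟨0, by
    refine ⟨fun _ => 0, fun x => ⟨le_rfl, zero_le_one⟩, ?_⟩
    have hS0 : S (fun _ => (0:ℝ)) = fun _ => (0:ℝ) := funext (lto_const S hS 0)
    have hT0 : T (fun _ => (0:ℝ)) = fun _ => (0:ℝ) := funext (lto_const T hT 0)
    simp only [Function.comp_apply, hS0, hT0, varNorm_const]⟩
  rintro r ⟨f, hf, rfl⟩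
  simp only [Function.comp_apply]
  calc varNorm (T (S f)) ≤ coeffErg T * varNorm (S f) := lto_varNorm_le T hT (S f)
    _ ≤ coeffErg T * coeffErg S := by
        apply mul_le_mul_of_nonneg_left _ (coeffErg_nonneg T hT)
        exact le_csSup (coeffErg_set_bddAbove S hS) ⟨f, hf, rfl⟩
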